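/- Under the hypotheses of the pseudo-primary decomposition lemma, each $Q_i = \mathcal{N} : s_i^\infty$ satisfies $Q_i : s_j^\infty = \mathcal{M}$ for every $j \neq i$. -/

import Mathlib

/-- Under the hypotheses of the pseudo-primary decomposition lemma,
`Q_i : s_j^∞ = M` for `j ≠ i`, where `Q_i = N : s_i^∞`. -/
theorem pseudo_primary_components_saturate (R : Type*) [CommRing R] [IsNoetherianRing R]
    (M : Type*) [AddCommGroup M] [Module R M] [Module.Finite R M]
    (N : Submodule R M) (hN : N ≠ ⊤)
    (r : ℕ) (hr : 2 ≤ r) (P : Fin r → Ideal R)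
    (hmin : ∀ i, P i ∈ (N.colon ⊤).minimalPrimes)
    (hall : ∀ Q ∈ (N.colon ⊤).minimalPrimes, ∃ i, Q = P i)
    (s : Fin r → R) (hsep : ∀ i, s i ∉ P i ∧ ∀ j, j ≠ i → s i ∈ P j) :
    ∀ i j, i ≠ j → ∀ f : M, ∃ a b : ℕ, s i ^ b • s j ^ a • f ∈ N := by
  intro i j hij f
  set I := N.colon ⊤ with hI
  -- s i * s j lies in every prime containing I, hence in the radical of I
  have hrad : s i * s j ∈ I.radical := by
    rw [Ideal.radical_eq_sInf]
    refine Ideal.mem_sInf.2 ?_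
    rintro J ⟨hJle, hJprime⟩
    obtain ⟨p, hp, hpJ⟩ := Ideal.exists_minimalPrimes_le hJle
    obtain ⟨k, rfl⟩ := hall p hp
    apply hpJ
    rcases eq_or_ne k i with rfl | hki
    · exact Ideal.mul_mem_left _ _ ((hsep j).2 k hij)
    · exact Ideal.mul_mem_right _ _ ((hsep i).2 k hki)
  obtain ⟨n, hn⟩ := hrad
  refine ⟨n, n, ?_⟩
  have : (s i * s j) ^ n • f ∈ N := Submodule.mem_colon.1 hn f (by simp)
  simpa [mul_pow, smul_smul] using this
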